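/- arXiv:cs/9902005 — 6 statements merged into one kernel-verified Lean document; each statement's English description precedes it below -/
import Mathlib

section
/- The mutual search algorithm HalfInTurn_n for odd n, in which site i queries sites i+1, i+2, ..., i+(n-1)/2 (mod n), with all queries of site 0 first, then all queries of site 1, and so on, has cost exactly n-1. Specifically, for i < j, if j - i ≤ (n-1)/2 then the cost of edge (i,j) is j-i; otherwise the cost of edge (j,i) is (n-1)/2 + n + i - j; and the maximum of these quantities over all pairs is n-1. -/
/-- An ordered tournament on `n` sites: a tournament (exactly one directed
edge between each pair of distinct vertices) together with a total order
on its edges, given by an (injective-on-edges) time stamp. -/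
structure OrdTournament (n : ℕ) where
  adj : Fin n → Fin n → Bool
  irrefl : ∀ i, adj i i = false
  oneway : ∀ i j : Fin n, i ≠ j → (adj i j = true ↔ adj j i = false)
  time : Fin n → Fin n → ℕ
  time_inj : ∀ i j k l : Fin n, adj i j = true → adj k l = true →
      time i j = time k l → (i, j) = (k, l)

namespace OrdTournament

variable {n : ℕ}

/-- Row `i`: the targets of the out-edges of vertex `i`. -/
def row (T : OrdTournament n) (i : Fin n) : Finset (Fin n) :=
  Finset.univ.filter (fun j => T.adj i j = true)

/-- The length of row `i` (the outdegree of `i`). -/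
def rowLen (T : OrdTournament n) (i : Fin n) : ℕ := (T.row i).card

/-- The maximum row length. -/
def maxRow (T : OrdTournament n) : ℕ := Finset.univ.sup T.rowLen

/-- The number of queries of row `i` strictly before the edge `(a,b)`. -/
def nBefore (T : OrdTournament n) (i a b : Fin n) : ℕ :=
  ((T.row i).filter (fun j => T.time i j < T.time a b)).card

/-- The cost of edge `(a,b)`:
`|E_a^{≺(a,b)}| + 1 + |E_b^{≺(a,b)}|`. -/
def edgeCost (T : OrdTournament n) (a b : Fin n) : ℕ :=
  T.nBefore a a b + 1 + T.nBefore b a b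

/-- The cost of the algorithm: the maximum edge cost. -/
def cost (T : OrdTournament n) : ℕ :=
  (Finset.univ.filter (fun p : Fin n × Fin n => T.adj p.1 p.2 = true)).sup
    (fun p => T.edgeCost p.1 p.2)

end OrdTournament

private lemma aux_mod1 {n i k : ℕ} (hi : i < n) (hk : k < n) :
    ((k + n - i) % n + i) % n = k := by
  have h1 : k + n - i = k + (n - i) := by omega
  rw [h1, Nat.mod_add_mod]
  have h2 : k + (n - i) + i = k + n := by omega
  rw [h2, Nat.add_mod_right, Nat.mod_eq_of_lt hk]

private lemma aux_mod2 {n i d : ℕ} (hi : i < n) (hd : d < n) :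
    ((d + i) % n + n - i) % n = d := by
  have h0 : (d + i) % n < n := Nat.mod_lt _ (by omega)
  have h1 : (d + i) % n + n - i = (d + i) % n + (n - i) := by omega
  rw [h1, Nat.mod_add_mod]
  have h2 : d + i + (n - i) = d + n := by omega
  rw [h2, Nat.add_mod_right, Nat.mod_eq_of_lt hd]

/-- Counting the queries of row `i` before time `t`, for HalfInTurn. -/
private lemma nBefore_eq {m n : ℕ} (hn : n = 2 * m + 1)
    (T : OrdTournament n)
    (hadj : ∀ i j : Fin n,
      T.adj i j = decide (1 ≤ (j.val + n - i.val) % n ∧ (j.val + n - i.val) % n ≤ m))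
    (htime : ∀ i j : Fin n, T.time i j = i.val * n + (j.val + n - i.val) % n)
    (i a b : Fin n) :
    T.nBefore i a b =
      ((Finset.range n).filter
        (fun d => 1 ≤ d ∧ d ≤ m ∧ i.val * n + d < T.time a b)).card := by
  classical
  unfold OrdTournament.nBefore OrdTournament.row
  rw [Finset.filter_filter]
  refine Finset.card_nbij' (fun k => (k.val + n - i.val) % n)
    (fun d => ⟨(d + i.val) % n, Nat.mod_lt _ (by omega)⟩) ?_ ?_ ?_ ?_
  · intro k hk
    simp only [Finset.mem_coe, Finset.mem_filter, Finset.mem_univ, true_and] at hk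
    obtain ⟨h1, h2⟩ := hk
    rw [hadj] at h1
    simp only [decide_eq_true_eq] at h1
    rw [htime] at h2
    simp only [Finset.mem_coe, Finset.mem_range, Finset.mem_filter]
    exact ⟨Nat.mod_lt _ (by omega), h1.1, h1.2, h2⟩
  · intro d hd
    simp only [Finset.mem_coe, Finset.mem_range, Finset.mem_filter] at hd
    obtain ⟨hdn, h1, h2, h3⟩ := hd
    simp only [Finset.mem_coe, Finset.mem_filter, Finset.mem_univ, true_and]
    rw [hadj, htime]
    simp only [decide_eq_true_eq]
    rw [aux_mod2 i.isLt hdn]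
    exact ⟨⟨h1, h2⟩, h3⟩
  · intro k hk
    apply Fin.ext
    exact aux_mod1 i.isLt k.isLt
  · intro d hd
    simp only [Finset.mem_coe, Finset.mem_range, Finset.mem_filter] at hd
    exact aux_mod2 i.isLt hd.1

/-- Algorithm `HalfInTurn_n` for odd `n = 2m+1`: site `i` queries sites
`i+1, ..., i+m (mod n)`, all queries of site 0 first, then site 1, etc.
For `i < j`: if `j - i ≤ m` then the cost of edge `(i,j)` is `j - i`,
otherwise the cost of edge `(j,i)` is `m + n + i - j`; and the cost of the
algorithm is exactly `n - 1`. -/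
theorem halfInTurn_cost {m : ℕ} (hm : 1 ≤ m) (n : ℕ) (hn : n = 2 * m + 1)
    (T : OrdTournament n)
    (hadj : ∀ i j : Fin n,
      T.adj i j = decide (1 ≤ (j.val + n - i.val) % n ∧ (j.val + n - i.val) % n ≤ m))
    (htime : ∀ i j : Fin n, T.time i j = i.val * n + (j.val + n - i.val) % n) :
    (∀ i j : Fin n, i.val < j.val →
        (j.val - i.val ≤ m → T.edgeCost i j = j.val - i.val) ∧
        (m < j.val - i.val → T.edgeCost j i = m + (n + i.val - j.val))) ∧
      T.cost = n - 1 := by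
  classical
  have hmn : m < n := by omega
  have main : ∀ i j : Fin n, i.val < j.val →
      (j.val - i.val ≤ m → T.edgeCost i j = j.val - i.val) ∧
      (m < j.val - i.val → T.edgeCost j i = m + (n + i.val - j.val)) := by
    intro i j hij
    have hjn : j.val < n := j.isLt
    have hin : i.val < n := i.isLt
    have hmul : i.val * n + n ≤ j.val * n := by
      have := Nat.mul_le_mul_right n (show i.val + 1 ≤ j.val from hij)
      rw [Nat.add_mul, one_mul] at this
      exact this
    constructor
    · -- case j - i ≤ m : edge (i, j)
      intro hle
      have hdij : (j.val + n - i.val) % n = j.val - i.val := by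
        have h1 : j.val + n - i.val = (j.val - i.val) + n := by omega
        rw [h1, Nat.add_mod_right, Nat.mod_eq_of_lt (by omega)]
      have htij : T.time i j = i.val * n + (j.val - i.val) := by
        rw [htime, hdij]
      unfold OrdTournament.edgeCost
      rw [nBefore_eq hn T hadj htime, nBefore_eq hn T hadj htime, htij]
      have e1 : ((Finset.range n).filter
          (fun d => 1 ≤ d ∧ d ≤ m ∧ i.val * n + d < i.val * n + (j.val - i.val)))
          = Finset.Ico 1 (j.val - i.val) := by
        ext d
        simp only [Finset.mem_filter, Finset.mem_range, Finset.mem_Ico]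
        set A := i.val * n with hA
        omega
      have e2 : ((Finset.range n).filter
          (fun d => 1 ≤ d ∧ d ≤ m ∧ j.val * n + d < i.val * n + (j.val - i.val)))
          = ∅ := by
        ext d
        simp only [Finset.mem_filter, Finset.mem_range, Finset.notMem_empty, iff_false]
        set A := i.val * n with hA
        set B := j.val * n with hB
        omega
      rw [e1, e2, Nat.card_Ico, Finset.card_empty]
      omega
    · -- case m < j - i : edge (j, i)
      intro hgt
      have hdji : (i.val + n - j.val) % n = n + i.val - j.val := by
        rw [Nat.mod_eq_of_lt (by omega)]
        omega
      have htji : T.time j i = j.val * n + (n + i.val - j.val) := by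
        rw [htime, hdji]
      have hbd : n + i.val - j.val ≤ m := by omega
      unfold OrdTournament.edgeCost
      rw [nBefore_eq hn T hadj htime, nBefore_eq hn T hadj htime, htji]
      have e1 : ((Finset.range n).filter
          (fun d => 1 ≤ d ∧ d ≤ m ∧ j.val * n + d < j.val * n + (n + i.val - j.val)))
          = Finset.Ico 1 (n + i.val - j.val) := by
        ext d
        simp only [Finset.mem_filter, Finset.mem_range, Finset.mem_Ico]
        set B := j.val * n with hB
        omega
      have e2 : ((Finset.range n).filter
          (fun d => 1 ≤ d ∧ d ≤ m ∧ i.val * n + d < j.val * n + (n + i.val - j.val)))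
          = Finset.Ico 1 (m + 1) := by
        ext d
        simp only [Finset.mem_filter, Finset.mem_range, Finset.mem_Ico]
        set A := i.val * n with hA
        set B := j.val * n with hB
        omega
      rw [e1, e2, Nat.card_Ico, Nat.card_Ico]
      omega
  refine ⟨main, ?_⟩
  have hub : T.cost ≤ n - 1 := by
    apply Finset.sup_le
    intro p hp
    simp only [Finset.mem_filter, Finset.mem_univ, true_and] at hp
    rw [hadj] at hp
    simp only [decide_eq_true_eq] at hp
    obtain ⟨h1, h2⟩ := hp
    rcases lt_trichotomy p.1.val p.2.val with h | h | h
    · have hd : (p.2.val + n - p.1.val) % n = p.2.val - p.1.val := by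
        have e : p.2.val + n - p.1.val = (p.2.val - p.1.val) + n := by omega
        rw [e, Nat.add_mod_right, Nat.mod_eq_of_lt (by omega)]
      rw [hd] at h1 h2
      rw [(main p.1 p.2 h).1 h2]
      omega
    · exfalso
      have e : p.2.val + n - p.1.val = n := by omega
      rw [e, Nat.mod_self] at h1
      omega
    · have hd : (p.2.val + n - p.1.val) % n = p.2.val + n - p.1.val := by
        rw [Nat.mod_eq_of_lt (by omega)]
      rw [hd] at h1 h2
      have hgt : m < p.1.val - p.2.val := by omega
      rw [(main p.2 p.1 h).2 hgt]
      omega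
  have hlb : n - 1 ≤ T.cost := by
    have hj : m + 1 < n := by omega
    have h0 : (0 : ℕ) < n := by omega
    set a : Fin n := ⟨m + 1, hj⟩ with ha
    set b : Fin n := ⟨0, h0⟩ with hb
    have hmem : (a, b) ∈ Finset.univ.filter
        (fun p : Fin n × Fin n => T.adj p.1 p.2 = true) := by
      simp only [Finset.mem_filter, Finset.mem_univ, true_and]
      rw [hadj]
      simp only [decide_eq_true_eq]
      have e : (b.val + n - a.val) % n = m := by
        show (0 + n - (m + 1)) % n = m
        rw [Nat.mod_eq_of_lt (by omega)]
        omega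
      rw [e]
      omega
    have := Finset.le_sup (f := fun p : Fin n × Fin n => T.edgeCost p.1 p.2) hmem
    have hc : T.edgeCost a b = n - 1 := by
      have h := (main b a (show b.val < a.val by simp [ha, hb])).2
        (show m < a.val - b.val by simp [ha, hb])
      rw [h]
      simp only [ha, hb]
      omega
    exact le_trans (le_of_eq hc.symm) this
  omega
end

section
/- For every n of the form 3k+1, there exists a saturated mutual search algorithm on n sites with cost ceil(2(n-1)/3). -/
namespace SatHIT

/-- cyclic distance from `i` to `j` modulo `2k+1` -/
def dd (k i j : ℕ) : ℕ := (j + (2*k+1) - i) % (2*k+1)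

lemma dd_eq {k i j : ℕ} (hi : i < 2*k+1) (hj : j < 2*k+1) :
    dd k i j = if i ≤ j then j - i else j + (2*k+1) - i := by
  unfold dd
  split
  · have h : j + (2*k+1) - i = (j - i) + (2*k+1) := by omega
    rw [h, Nat.add_mod_right, Nat.mod_eq_of_lt (by omega)]
  · exact Nat.mod_eq_of_lt (by omega)

lemma dd_self {k i : ℕ} (hi : i < 2*k+1) : dd k i i = 0 := by
  rw [dd_eq hi hi]; simp

lemma dd_pos {k i j : ℕ} (hi : i < 2*k+1) (hj : j < 2*k+1) (hne : i ≠ j) :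
    1 ≤ dd k i j := by
  rw [dd_eq hi hj]; split <;> omega

lemma dd_lt {k i j : ℕ} (hi : i < 2*k+1) (hj : j < 2*k+1) :
    dd k i j < 2*k+1 := by
  rw [dd_eq hi hj]; split <;> omega

lemma dd_add {k i j : ℕ} (hi : i < 2*k+1) (hj : j < 2*k+1) (hne : i ≠ j) :
    dd k i j + dd k j i = 2*k+1 := by
  rw [dd_eq hi hj, dd_eq hj hi]
  rcases Nat.lt_or_ge i j with h | h
  · rw [if_pos (le_of_lt h), if_neg (by omega)]; omega
  · rw [if_neg (by omega), if_pos (by omega)]; omega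

lemma dd_inj {k i j l : ℕ} (hi : i < 2*k+1) (hj : j < 2*k+1) (hl : l < 2*k+1)
    (h : dd k i j = dd k i l) : j = l := by
  rw [dd_eq hi hj, dd_eq hi hl] at h
  split_ifs at h <;> omega

lemma qr_unique {m q1 r1 q2 r2 : ℕ} (h1 : r1 < m) (h2 : r2 < m)
    (h : q1 * m + r1 = q2 * m + r2) : q1 = q2 ∧ r1 = r2 := by
  have hm : 0 < m := by omega
  have e1 : (q1 * m + r1) / m = q1 := by
    rw [mul_comm, Nat.mul_add_div hm, Nat.div_eq_of_lt h1, add_zero]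
  have e2 : (q2 * m + r2) / m = q2 := by
    rw [mul_comm, Nat.mul_add_div hm, Nat.div_eq_of_lt h2, add_zero]
  have e3 : (q1 * m + r1) % m = r1 := by
    rw [mul_comm, Nat.mul_add_mod, Nat.mod_eq_of_lt h1]
  have e4 : (q2 * m + r2) % m = r2 := by
    rw [mul_comm, Nat.mul_add_mod, Nat.mod_eq_of_lt h2]
  constructor
  · rw [← e1, ← e2, h]
  · rw [← e3, ← e4, h]

lemma card_le_of_injOn_lt {α : Type*} (s : Finset α) (g : α → ℕ) (M : ℕ)
    (hlt : ∀ a ∈ s, g a < M) (hinj : Set.InjOn g s) : s.card ≤ M := by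
  have h1 : s.card = (s.image g).card := (Finset.card_image_of_injOn hinj).symm
  have h2 : s.image g ⊆ Finset.range M := by
    intro x hx
    rcases Finset.mem_image.mp hx with ⟨a, ha, rfl⟩
    exact Finset.mem_range.mpr (hlt a ha)
  calc s.card = (s.image g).card := h1
    _ ≤ (Finset.range M).card := Finset.card_le_card h2
    _ = M := Finset.card_range M

/-- adjacency -/
def adjF (k : ℕ) (i j : Fin (3*k+1)) : Bool :=
  if i.val < 2*k+1 then
    (if j.val < 2*k+1 then decide (1 ≤ dd k i.val j.val ∧ dd k i.val j.val ≤ k)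
     else true)
  else
    (if j.val < 2*k+1 then false else decide (i.val < j.val))

/-- time stamps -/
def timeF (k : ℕ) (i j : Fin (3*k+1)) : ℕ :=
  if i.val < 2*k+1 then
    (if j.val < 2*k+1 then (dd k i.val j.val - 1) * (2*k+1) + i.val
     else k*(2*k+1) + (j.val - (2*k+1)) * (2*k+1) + i.val)
  else 2*k*(2*k+1) + i.val * (3*k+1) + j.val

lemma adj_cases {k : ℕ} {a b : Fin (3*k+1)} (h : adjF k a b = true) :
    (a.val < 2*k+1 ∧ b.val < 2*k+1 ∧ 1 ≤ dd k a.val b.val ∧ dd k a.val b.val ≤ k)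
    ∨ (a.val < 2*k+1 ∧ ¬ b.val < 2*k+1)
    ∨ (¬ a.val < 2*k+1 ∧ ¬ b.val < 2*k+1 ∧ a.val < b.val) := by
  unfold adjF at h
  by_cases ha : a.val < 2*k+1 <;> by_cases hb : b.val < 2*k+1 <;>
    simp [ha, hb] at h ⊢ <;> tauto

/-- time bound for core-core edges -/
lemma t1_lt {k : ℕ} {d a : ℕ} (hd1 : 1 ≤ d) (hd2 : d ≤ k) (ha : a < 2*k+1) :
    (d - 1) * (2*k+1) + a < k * (2*k+1) := by
  have h1 : (d - 1) * (2*k+1) + a < (d - 1) * (2*k+1) + (2*k+1) := by omega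
  have h2 : (d - 1) * (2*k+1) + (2*k+1) = d * (2*k+1) := by
    have : d - 1 + 1 = d := by omega
    calc (d - 1) * (2*k+1) + (2*k+1) = (d - 1 + 1) * (2*k+1) := by ring
      _ = d * (2*k+1) := by rw [this]
  have h3 : d * (2*k+1) ≤ k * (2*k+1) := Nat.mul_le_mul_right _ hd2
  omega

/-- time bound for core-extra edges -/
lemma t2_lt {k : ℕ} {b a : ℕ} (hb1 : 2*k+1 ≤ b) (hb2 : b < 3*k+1) (ha : a < 2*k+1) :
    k*(2*k+1) + (b - (2*k+1)) * (2*k+1) + a < 2*k*(2*k+1) := by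
  have hk : 1 ≤ k := by omega
  have hd : b - (2*k+1) + 1 ≤ k := by omega
  have h2 : (b - (2*k+1)) * (2*k+1) + (2*k+1) = (b - (2*k+1) + 1) * (2*k+1) := by ring
  have h3 : (b - (2*k+1) + 1) * (2*k+1) ≤ k * (2*k+1) := Nat.mul_le_mul_right _ hd
  have h4 : k*(2*k+1) + k*(2*k+1) = 2*k*(2*k+1) := by ring
  omega

lemma T_irrefl (k : ℕ) (i : Fin (3*k+1)) : adjF k i i = false := by
  unfold adjF
  by_cases hi : i.val < 2*k+1 <;> simp [hi, dd_self]

lemma T_oneway (k : ℕ) (i j : Fin (3*k+1)) (hne : i ≠ j) :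
    (adjF k i j = true ↔ adjF k j i = false) := by
  have hvne : i.val ≠ j.val := fun h => hne (Fin.ext h)
  unfold adjF
  by_cases hi : i.val < 2*k+1 <;> by_cases hj : j.val < 2*k+1 <;>
      simp [hi, hj]
  · have hadd := dd_add hi hj hvne
    have h1 := dd_pos hi hj hvne
    have h2 := dd_pos hj hi (Ne.symm hvne)
    have h3 := dd_lt hi hj
    have h4 := dd_lt hj hi
    constructor
    · intro h; omega
    · intro h; omega
  · constructor
    · intro h; omega
    · intro h; omega

lemma T_time_inj (k : ℕ) (a b c e : Fin (3*k+1)) (hab : adjF k a b = true)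
    (hce : adjF k c e = true) (ht : timeF k a b = timeF k c e) : (a, b) = (c, e) := by
  have hb3 := b.isLt
  have he3 := e.isLt
  have suff : a.val = c.val ∧ b.val = e.val → (a, b) = (c, e) := by
    rintro ⟨h1, h2⟩
    ext <;> simp [Fin.ext_iff, h1, h2]
  apply suff
  rcases adj_cases hab with ⟨ha, hb, hd1, hd2⟩ | ⟨ha, hb⟩ | ⟨ha, hb, hlt⟩ <;>
    rcases adj_cases hce with ⟨hc, he, hd1', hd2'⟩ | ⟨hc, he⟩ | ⟨hc, he, hlt'⟩ <;>
    unfold timeF at ht <;>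
    simp only [ha, hb, hc, he, if_pos, if_neg, if_true, if_false] at ht
  -- P1 = P1
  · obtain ⟨hq, hr⟩ := qr_unique ha hc ht
    have hac : a.val = c.val := hr
    have : dd k a.val b.val = dd k c.val e.val := by omega
    rw [← hac] at this
    exact ⟨hac, dd_inj ha hb he this⟩
  -- P1 = P2 : contradiction
  · exfalso
    have h1 : (dd k a.val b.val - 1) * (2*k+1) + a.val < k*(2*k+1) := t1_lt hd1 hd2 ha
    omega
  -- P1 = P3 : contradiction
  · exfalso
    have h1 : (dd k a.val b.val - 1) * (2*k+1) + a.val < k*(2*k+1) := t1_lt hd1 hd2 ha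
    have h2 : k*(2*k+1) ≤ 2*k*(2*k+1) := Nat.mul_le_mul_right _ (by omega)
    omega
  -- P2 = P1
  · exfalso
    have h1 : (dd k c.val e.val - 1) * (2*k+1) + c.val < k*(2*k+1) := t1_lt hd1' hd2' hc
    omega
  -- P2 = P2
  · have ht' : (b.val - (2*k+1)) * (2*k+1) + a.val
        = (e.val - (2*k+1)) * (2*k+1) + c.val := by omega
    obtain ⟨hq, hr⟩ := qr_unique ha hc ht'
    exact ⟨hr, by omega⟩
  -- P2 = P3
  · exfalso
    have h1 : k*(2*k+1) + (b.val - (2*k+1)) * (2*k+1) + a.val < 2*k*(2*k+1) :=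
      t2_lt (by omega) hb3 ha
    omega
  -- P3 = P1
  · exfalso
    have h1 : (dd k c.val e.val - 1) * (2*k+1) + c.val < k*(2*k+1) := t1_lt hd1' hd2' hc
    have h2 : k*(2*k+1) ≤ 2*k*(2*k+1) := Nat.mul_le_mul_right _ (by omega)
    omega
  -- P3 = P2
  · exfalso
    have h1 : k*(2*k+1) + (e.val - (2*k+1)) * (2*k+1) + c.val < 2*k*(2*k+1) :=
      t2_lt (by omega) he3 hc
    omega
  -- P3 = P3
  · have ht' : a.val * (3*k+1) + b.val = c.val * (3*k+1) + e.val := by omega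
    obtain ⟨hq, hr⟩ := qr_unique hb3 he3 ht'
    exact ⟨hq, hr⟩

/-- the extended HalfInTurn tournament -/
def T (k : ℕ) : OrdTournament (3*k+1) where
  adj := adjF k
  irrefl := T_irrefl k
  oneway := T_oneway k
  time := timeF k
  time_inj := T_time_inj k

lemma adjF_iff {k : ℕ} {a b : Fin (3*k+1)} :
    adjF k a b = true ↔
      ((a.val < 2*k+1 ∧ b.val < 2*k+1 ∧ 1 ≤ dd k a.val b.val ∧ dd k a.val b.val ≤ k)
       ∨ (a.val < 2*k+1 ∧ ¬ b.val < 2*k+1)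
       ∨ (¬ a.val < 2*k+1 ∧ ¬ b.val < 2*k+1 ∧ a.val < b.val)) := by
  unfold adjF
  by_cases ha : a.val < 2*k+1 <;> by_cases hb : b.val < 2*k+1 <;>
    simp [ha, hb] <;> tauto

lemma mem_row_iff {k : ℕ} {a j : Fin (3*k+1)} :
    j ∈ (T k).row a ↔ adjF k a j = true := by
  rw [OrdTournament.row, Finset.mem_filter]
  exact ⟨fun h => h.2, fun h => ⟨Finset.mem_univ _, h⟩⟩

lemma timeF_cc {k : ℕ} {a b : Fin (3*k+1)} (ha : a.val < 2*k+1) (hb : b.val < 2*k+1) :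
    (T k).time a b = (dd k a.val b.val - 1) * (2*k+1) + a.val := by
  show timeF k a b = _
  unfold timeF; rw [if_pos ha, if_pos hb]

lemma timeF_ce {k : ℕ} {a b : Fin (3*k+1)} (ha : a.val < 2*k+1) (hb : ¬ b.val < 2*k+1) :
    (T k).time a b = k*(2*k+1) + (b.val - (2*k+1)) * (2*k+1) + a.val := by
  show timeF k a b = _
  unfold timeF; rw [if_pos ha, if_neg hb]

lemma timeF_ee {k : ℕ} {a b : Fin (3*k+1)} (ha : ¬ a.val < 2*k+1) :
    (T k).time a b = 2*k*(2*k+1) + a.val * (3*k+1) + b.val := by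
  show timeF k a b = _
  unfold timeF; rw [if_neg ha]

lemma rowLen_le (k : ℕ) (a : Fin (3*k+1)) : (T k).rowLen a ≤ 2*k := by
  unfold OrdTournament.rowLen
  by_cases ha : a.val < 2*k+1
  · apply card_le_of_injOn_lt _
      (fun j => if j.val < 2*k+1 then dd k a.val j.val - 1 else j.val - (k+1)) (2*k)
    · intro j hj
      have hadj := mem_row_iff.mp hj
      rcases adjF_iff.mp hadj with ⟨_, hb, hd1, hd2⟩ | ⟨_, hb⟩ | ⟨h, _, _⟩
      · rw [if_pos hb]; omega
      · rw [if_neg hb]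
        have := j.isLt
        omega
      · exact absurd ha h
    · intro x hx y hy hxy
      have hax := mem_row_iff.mp hx
      have hay := mem_row_iff.mp hy
      simp only at hxy
      rcases adjF_iff.mp hax with ⟨_, hbx, hdx1, hdx2⟩ | ⟨_, hbx⟩ | ⟨h, _, _⟩ <;>
        [skip; skip; exact absurd ha h] <;>
        rcases adjF_iff.mp hay with ⟨_, hby, hdy1, hdy2⟩ | ⟨_, hby⟩ | ⟨h, _, _⟩ <;>
        [skip; skip; exact absurd ha h; skip; skip; exact absurd ha h]
      · rw [if_pos hbx, if_pos hby] at hxy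
        have hdd : dd k a.val x.val = dd k a.val y.val := by omega
        exact Fin.ext (dd_inj ha hbx hby hdd)
      · rw [if_pos hbx, if_neg hby] at hxy
        have := y.isLt
        omega
      · rw [if_neg hbx, if_pos hby] at hxy
        have := x.isLt
        omega
      · rw [if_neg hbx, if_neg hby] at hxy
        have := x.isLt
        have := y.isLt
        exact Fin.ext (by omega)
  · apply card_le_of_injOn_lt _ (fun j => j.val - (2*k+2)) (2*k)
    · intro j hj
      have hadj := mem_row_iff.mp hj
      rcases adjF_iff.mp hadj with ⟨h, _, _, _⟩ | ⟨h, _⟩ | ⟨_, hb, hlt⟩ <;>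
        [exact absurd h ha; exact absurd h ha; skip]
      have := j.isLt
      have := a.isLt
      omega
    · intro x hx y hy hxy
      have hax := mem_row_iff.mp hx
      have hay := mem_row_iff.mp hy
      rcases adjF_iff.mp hax with ⟨h, _, _, _⟩ | ⟨h, _⟩ | ⟨_, hbx, hltx⟩ <;>
        [exact absurd h ha; exact absurd h ha; skip]
      rcases adjF_iff.mp hay with ⟨h, _, _, _⟩ | ⟨h, _⟩ | ⟨_, hby, hlty⟩ <;>
        [exact absurd h ha; exact absurd h ha; skip]
      simp only at hxy
      exact Fin.ext (by omega)

def fz (k d : ℕ) : Fin (3*k+1) :=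
  if d < k then ⟨min (d+1) (3*k), by omega⟩ else ⟨min (d+k+1) (3*k), by omega⟩

lemma fz_val_lt {k d : ℕ} (h : d < k) : (fz k d).val = d + 1 := by
  unfold fz; rw [if_pos h]; simp; omega

lemma fz_val_ge {k d : ℕ} (h : ¬ d < k) (h2 : d < 2*k) : (fz k d).val = d + k + 1 := by
  unfold fz; rw [if_neg h]; simp; omega

lemma rowLen_zero (k : ℕ) : (T k).rowLen ⟨0, by omega⟩ = 2*k := by
  refine le_antisymm (rowLen_le k _) ?_
  unfold OrdTournament.rowLen
  have h := Finset.card_le_card_of_injOn (fz k)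
    (s := Finset.range (2*k)) (t := (T k).row ⟨0, by omega⟩) ?_ ?_
  · simpa using h
  · intro d hd
    have hd2 : d < 2*k := Finset.mem_range.mp hd
    rw [Finset.mem_coe, mem_row_iff, adjF_iff]
    simp only [show ((⟨0, by omega⟩ : Fin (3*k+1)) : ℕ) = 0 from rfl]
    by_cases hdk : d < k
    · left
      rw [fz_val_lt hdk]
      refine ⟨by omega, by omega, ?_⟩
      have hdd : dd k 0 (d+1) = d + 1 := by
        rw [dd_eq (by omega) (by omega)]; simp
      rw [hdd]
      omega
    · right; left
      rw [fz_val_ge hdk hd2]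
      omega
  · intro x hx y hy hxy
    have hx2 : x < 2*k := Finset.mem_range.mp hx
    have hy2 : y < 2*k := Finset.mem_range.mp hy
    have hv : (fz k x).val = (fz k y).val := by rw [hxy]
    by_cases hxk : x < k <;> by_cases hyk : y < k
    · rw [fz_val_lt hxk, fz_val_lt hyk] at hv; omega
    · rw [fz_val_lt hxk, fz_val_ge hyk hy2] at hv; omega
    · rw [fz_val_ge hxk hx2, fz_val_lt hyk] at hv; omega
    · rw [fz_val_ge hxk hx2, fz_val_ge hyk hy2] at hv; omega

lemma maxRow_eq (k : ℕ) : (T k).maxRow = 2*k := by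
  apply le_antisymm
  · exact Finset.sup_le (fun a _ => rowLen_le k a)
  · calc 2*k = (T k).rowLen ⟨0, by omega⟩ := (rowLen_zero k).symm
      _ ≤ (T k).maxRow := Finset.le_sup (Finset.mem_univ _)

lemma mul_lt_mul_of_lt {m x y : ℕ} (hm : 0 < m) (h : x < y) : x * m + (m - 1) < y * m := by
  have h1 : x + 1 ≤ y := h
  have h2 : (x + 1) * m ≤ y * m := Nat.mul_le_mul_right _ h1
  have h3 : (x + 1) * m = x * m + m := by ring
  omega

lemma edgeCost_le (k : ℕ) (a b : Fin (3*k+1)) (h : adjF k a b = true) :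
    (T k).edgeCost a b ≤ 2*k := by
  unfold OrdTournament.edgeCost OrdTournament.nBefore
  rcases adjF_iff.mp h with ⟨ha, hb, hd1, hd2⟩ | ⟨ha, hb⟩ | ⟨ha, hb, hlt⟩
  -- core-core edge
  · set d := dd k a.val b.val with hdref
    have htab : (T k).time a b = (d - 1) * (2*k+1) + a.val := timeF_cc ha hb
    have htlt : (T k).time a b < k * (2*k+1) := by rw [htab]; exact t1_lt hd1 hd2 ha
    -- helper: any j in a filtered row with small time is a core target
    have hA : (((T k).row a).filter (fun j => (T k).time a j < (T k).time a b)).card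
        ≤ d - 1 := by
      apply card_le_of_injOn_lt _ (fun j => dd k a.val j.val - 1) (d - 1)
      · intro j hj
        rw [Finset.mem_filter] at hj
        obtain ⟨hrow, htime⟩ := hj
        rcases adjF_iff.mp (mem_row_iff.mp hrow) with ⟨_, hjc, hj1, hj2⟩ | ⟨_, hjc⟩ |
            ⟨hh, _, _⟩
        · rw [timeF_cc ha hjc, htab] at htime
          by_contra hcon
          have hge : d - 1 ≤ dd k a.val j.val - 1 := by omega
          have := Nat.mul_le_mul_right (2*k+1) hge
          omega
        · rw [timeF_ce ha hjc] at htime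
          omega
        · exact absurd ha hh
      · intro x hx y hy hxy
        obtain ⟨hrx, htx⟩ := Finset.mem_filter.mp (Finset.mem_coe.mp hx)
        obtain ⟨hry, hty⟩ := Finset.mem_filter.mp (Finset.mem_coe.mp hy)
        rcases adjF_iff.mp (mem_row_iff.mp hrx) with ⟨_, hxc, hx1, hx2⟩ | ⟨_, hxc⟩ |
            ⟨hh, _, _⟩
        · rcases adjF_iff.mp (mem_row_iff.mp hry) with ⟨_, hyc, hy1, hy2⟩ | ⟨_, hyc⟩ |
              ⟨hh, _, _⟩
          · simp only at hxy
            exact Fin.ext (dd_inj ha hxc hyc (by omega))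
          · rw [timeF_ce ha hyc] at hty; omega
          · exact absurd ha hh
        · rw [timeF_ce ha hxc] at htx; omega
        · exact absurd ha hh
    have hB : (((T k).row b).filter (fun j => (T k).time b j < (T k).time a b)).card
        ≤ d := by
      apply card_le_of_injOn_lt _ (fun j => dd k b.val j.val - 1) d
      · intro j hj
        rw [Finset.mem_filter] at hj
        obtain ⟨hrow, htime⟩ := hj
        rcases adjF_iff.mp (mem_row_iff.mp hrow) with ⟨_, hjc, hj1, hj2⟩ | ⟨_, hjc⟩ |
            ⟨hh, _, _⟩
        · rw [timeF_cc hb hjc, htab] at htime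
          by_contra hcon
          have hge : d ≤ dd k b.val j.val - 1 := by omega
          have h2 := Nat.mul_le_mul_right (2*k+1) hge
          have h3 : (d - 1) * (2*k+1) + (2*k+1) = d * (2*k+1) := by
            have hd : d - 1 + 1 = d := by omega
            calc (d-1) * (2*k+1) + (2*k+1) = (d - 1 + 1) * (2*k+1) := by ring
              _ = d * (2*k+1) := by rw [hd]
          have h4 : d * (2*k+1) ≤ (dd k b.val j.val - 1) * (2*k+1) := h2
          omega
        · rw [timeF_ce hb hjc] at htime
          omega
        · exact absurd hb hh
      · intro x hx y hy hxy
        obtain ⟨hrx, htx⟩ := Finset.mem_filter.mp (Finset.mem_coe.mp hx)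
        obtain ⟨hry, hty⟩ := Finset.mem_filter.mp (Finset.mem_coe.mp hy)
        rcases adjF_iff.mp (mem_row_iff.mp hrx) with ⟨_, hxc, hx1, hx2⟩ | ⟨_, hxc⟩ |
            ⟨hh, _, _⟩
        · rcases adjF_iff.mp (mem_row_iff.mp hry) with ⟨_, hyc, hy1, hy2⟩ | ⟨_, hyc⟩ |
              ⟨hh, _, _⟩
          · simp only at hxy
            exact Fin.ext (dd_inj hb hxc hyc (by omega))
          · rw [timeF_ce hb hyc] at hty; omega
          · exact absurd hb hh
        · rw [timeF_ce hb hxc] at htx; omega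
        · exact absurd hb hh
    omega
  -- core-extra and extra-extra edges: nBefore of the target is 0
  all_goals {
    have hbrow : b ∈ (T k).row a := mem_row_iff.mpr h
    have hsub : ((T k).row a).filter (fun j => (T k).time a j < (T k).time a b)
        ⊆ ((T k).row a).erase b := by
      intro j hj
      rw [Finset.mem_filter] at hj
      rw [Finset.mem_erase]
      refine ⟨?_, hj.1⟩
      rintro rfl
      exact lt_irrefl _ hj.2
    have hcard1 : (((T k).row a).filter
        (fun j => (T k).time a j < (T k).time a b)).card ≤ (T k).rowLen a - 1 := by
      calc _ ≤ (((T k).row a).erase b).card := Finset.card_le_card hsub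
        _ = (T k).rowLen a - 1 := by rw [Finset.card_erase_of_mem hbrow]; rfl
    have hlen1 : 1 ≤ (T k).rowLen a := Finset.card_pos.mpr ⟨b, hbrow⟩
    have hlen2 : (T k).rowLen a ≤ 2*k := rowLen_le k a
    have hB : (((T k).row b).filter
        (fun j => (T k).time b j < (T k).time a b)).card = 0 := by
      rw [Finset.card_eq_zero, Finset.filter_eq_empty_iff]
      intro j hj
      rcases adjF_iff.mp (mem_row_iff.mp hj) with ⟨hh, _, _, _⟩ | ⟨hh, _⟩ |
          ⟨_, hjc, hjlt⟩
      · exact absurd hh hb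
      · exact absurd hh hb
      · rw [timeF_ee hb]
        first
        | (rw [timeF_ce ha hb]
           have := t2_lt (by omega) b.isLt ha
           omega)
        | (rw [timeF_ee ha]
           have hn : a.val * (3*k+1) + (3*k+1) ≤ b.val * (3*k+1) := by
             have hab1 : a.val + 1 ≤ b.val := hlt
             have h2 := Nat.mul_le_mul_right (3*k+1) hab1
             have h3 : (a.val+1) * (3*k+1) = a.val*(3*k+1) + (3*k+1) := by ring
             omega
           have := b.isLt
           omega)
    omega
  }

lemma cost_le (k : ℕ) : (T k).cost ≤ 2*k := by
  apply Finset.sup_le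
  intro p hp
  exact edgeCost_le k p.1 p.2 ((Finset.mem_filter.mp hp).2)

lemma cost_ge (k : ℕ) (hk : 1 ≤ k) : 2*k ≤ (T k).cost := by
  set z : Fin (3*k+1) := ⟨0, by omega⟩ with hzdef
  set w : Fin (3*k+1) := ⟨3*k, by omega⟩ with hwdef
  have hz0 : z.val = 0 := rfl
  have hw0 : w.val = 3*k := rfl
  have hz : z.val < 2*k+1 := by omega
  have hw : ¬ w.val < 2*k+1 := by omega
  have hzw : adjF k z w = true := adjF_iff.mpr (Or.inr (Or.inl ⟨hz, hw⟩))
  have hmem : (z, w) ∈ Finset.univ.filter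
      (fun p : Fin (3*k+1) × Fin (3*k+1) => (T k).adj p.1 p.2 = true) := by
    rw [Finset.mem_filter]
    exact ⟨Finset.mem_univ _, hzw⟩
  have hle := Finset.le_sup (f := fun p : Fin (3*k+1) × Fin (3*k+1) =>
    (T k).edgeCost p.1 p.2) hmem
  refine le_trans ?_ hle
  show 2*k ≤ (T k).edgeCost z w
  unfold OrdTournament.edgeCost
  have hwrow : w ∈ (T k).row z := mem_row_iff.mpr hzw
  have hA : 2*k - 1 ≤ (T k).nBefore z z w := by
    unfold OrdTournament.nBefore
    have hsub : ((T k).row z).erase w ⊆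
        ((T k).row z).filter (fun j => (T k).time z j < (T k).time z w) := by
      intro j hj
      obtain ⟨hne, hrow⟩ := Finset.mem_erase.mp hj
      rw [Finset.mem_filter]
      refine ⟨hrow, ?_⟩
      have hjne : j.val ≠ w.val := fun hh => hne (Fin.ext hh)
      rcases adjF_iff.mp (mem_row_iff.mp hrow) with ⟨_, hjc, hj1, hj2⟩ | ⟨_, hjc⟩ |
          ⟨hh, _, _⟩
      · rw [timeF_cc hz hjc, timeF_ce hz hw]
        have := t1_lt hj1 hj2 hz
        omega
      · rw [timeF_ce hz hjc, timeF_ce hz hw]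
        have hjlt := j.isLt
        have hlt2 : j.val - (2*k+1) < w.val - (2*k+1) := by omega
        have := mul_lt_mul_of_lt (m := 2*k+1) (by omega) hlt2
        omega
      · exact absurd hz hh
    have h20 : ((T k).row z).card = 2*k := rowLen_zero k
    have hcard : (((T k).row z).erase w).card = 2*k - 1 := by
      rw [Finset.card_erase_of_mem hwrow, h20]
    calc 2*k - 1 = (((T k).row z).erase w).card := hcard.symm
      _ ≤ _ := Finset.card_le_card hsub
  omega

lemma cost_eq (k : ℕ) : (T k).cost = 2*k := by
  rcases Nat.eq_zero_or_pos k with rfl | hk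
  · have h := cost_le 0
    omega
  · exact le_antisymm (cost_le k) (cost_ge k hk)

theorem saturatedHalfInTurn_exists' (k : ℕ) :
    ∃ T : OrdTournament (3 * k + 1),
      T.cost = T.maxRow ∧
      T.cost = (2 * (3 * k + 1 - 1) + 2) / 3 := by
  refine ⟨T k, ?_, ?_⟩
  · rw [cost_eq, maxRow_eq]
  · rw [cost_eq]
    omega

end SatHIT

/-- For every `n` of the form `3k+1` there is a saturated mutual search
algorithm on `n` sites (its cost equals its maximum row length) with cost
`⌈2(n-1)/3⌉` (written `(2*(n-1)+2)/3` with natural division). -/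
theorem saturatedHalfInTurn_exists (k : ℕ) :
    ∃ T : OrdTournament (3 * k + 1),
      T.cost = T.maxRow ∧
      T.cost = (2 * (3 * k + 1 - 1) + 2) / 3 := by
  exact SatHIT.saturatedHalfInTurn_exists' k
end

section
/- If a mutual search algorithm T' results from a partial mutual search algorithm T by retiring an edge e of minimum retiring cost among all non-retired edges, then the cost of T equals the cost of T'. In other words, greedily retiring the cheapest edge at each step yields an optimal total refinement. -/
/-- `adj` is a tournament on `Fin n`: no self-loops and exactly one direction
between each pair of distinct vertices. -/
def IsTourn {n : ℕ} (adj : Fin n → Fin n → Bool) : Prop :=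
  (∀ i, adj i i = false) ∧ ∀ i j : Fin n, i ≠ j → (adj i j = true ↔ adj j i = false)

/-- `M` is a total refinement of the partial MS algorithm `(adj, R)`:
`M` enumerates all edges of the tournament without repetition (earlier in the
list meaning earlier in the total order `≺`), and the retired list `R` forms
the final segment of `M`. -/
def IsRefinement {n : ℕ} (adj : Fin n → Fin n → Bool)
    (R M : List (Fin n × Fin n)) : Prop :=
  M.Nodup ∧ (∀ e : Fin n × Fin n, e ∈ M ↔ adj e.1 e.2 = true) ∧ ∃ P, M = P ++ R

/-- The cost of edge `e = (i,j)` in the totally ordered tournament `M`: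
`|E_i^{≺e}| + 1 + |E_j^{≺e}|`, i.e. one more than the number of edges
preceding `e` in `M` that leave `i` or `j`. -/
def listEdgeCost {n : ℕ} (M : List (Fin n × Fin n)) (e : Fin n × Fin n) : ℕ :=
  ((M.take (M.idxOf e)).filter (fun f => f.1 = e.1 ∨ f.1 = e.2)).length + 1

/-- The cost of the totally ordered tournament `M`: the maximum edge cost. -/
def listCost {n : ℕ} (M : List (Fin n × Fin n)) : ℕ :=
  (M.map (listEdgeCost M)).foldr max 0

/-- The retiring cost of an edge `e = (i,j) ∈ E_i - R`:
`|E_i - R| + |E_j - R|`. -/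
def retCost {n : ℕ} (adj : Fin n → Fin n → Bool) (R : List (Fin n × Fin n))
    (e : Fin n × Fin n) : ℕ :=
  (Finset.univ.filter (fun f : Fin n × Fin n =>
      adj f.1 f.2 = true ∧ (f.1 = e.1 ∨ f.1 = e.2) ∧ f ∉ R)).card

/-- The cost of the partial MS algorithm `(adj, R)`: the minimum cost among
all of its total refinements. -/
noncomputable def pCost {n : ℕ} (adj : Fin n → Fin n → Bool)
    (R : List (Fin n × Fin n)) : ℕ :=
  sInf {c : ℕ | ∃ M, IsRefinement adj R M ∧ listCost M = c}

lemma aux_foldr_max_le {c : ℕ} {l : List ℕ} : l.foldr max 0 ≤ c ↔ ∀ x ∈ l, x ≤ c := by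
  induction l with
  | nil => simp
  | cons a l ih => simp [ih, Nat.max_le]

lemma aux_le_foldr_max {l : List ℕ} {x : ℕ} (h : x ∈ l) : x ≤ l.foldr max 0 := by
  induction l with
  | nil => simp at h
  | cons a l ih =>
    rcases List.mem_cons.1 h with rfl | h
    · exact le_max_left _ _
    · exact le_trans (ih h) (le_max_right _ _)

lemma aux_edgeCost_le_listCost {n : ℕ} {M : List (Fin n × Fin n)} {f : Fin n × Fin n}
    (h : f ∈ M) : listEdgeCost M f ≤ listCost M :=
  aux_le_foldr_max (List.mem_map_of_mem h)

lemma aux_listCost_le {n : ℕ} {M : List (Fin n × Fin n)} {c : ℕ}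
    (h : ∀ f ∈ M, listEdgeCost M f ≤ c) : listCost M ≤ c := by
  refine aux_foldr_max_le.2 ?_
  intro x hx
  obtain ⟨f, hf, rfl⟩ := List.mem_map.1 hx
  exact h f hf

lemma aux_take_indexOf {α : Type*} [BEq α] [LawfulBEq α] {X Y : List α} {f : α}
    (h : f ∉ X) : (X ++ f :: Y).take ((X ++ f :: Y).idxOf f) = X := by
  induction X with
  | nil => simp [List.idxOf, List.findIdx_cons]
  | cons a X ih =>
    simp only [List.mem_cons, not_or] at h
    have h1 : ((a :: X) ++ f :: Y).idxOf f = ((X ++ f :: Y).idxOf f) + 1 := by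
      simp [List.idxOf, List.findIdx_cons, Bool.cond_eq_ite, Ne.symm h.1]
    rw [h1, List.cons_append, List.take_succ_cons, ih h.2]

lemma aux_edgeCost_split {n : ℕ} {X Y : List (Fin n × Fin n)} {f : Fin n × Fin n}
    (h : f ∉ X) :
    listEdgeCost (X ++ f :: Y) f
      = (X.filter (fun g => g.1 = f.1 ∨ g.1 = f.2)).length + 1 := by
  unfold listEdgeCost
  rw [aux_take_indexOf h]

lemma aux_filter_retCost {n : ℕ} (adj : Fin n → Fin n → Bool)
    (R P : List (Fin n × Fin n)) (hP : P.Nodup)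
    (hPm : ∀ f, f ∈ P ↔ adj f.1 f.2 = true ∧ f ∉ R) (x : Fin n × Fin n) :
    (P.filter (fun f => f.1 = x.1 ∨ f.1 = x.2)).length = retCost adj R x := by
  classical
  unfold retCost
  rw [← List.toFinset_card_of_nodup (hP.filter _)]
  congr 1
  ext f
  simp only [List.mem_toFinset, List.mem_filter, hPm f, Finset.mem_filter,
    Finset.mem_univ, true_and, decide_eq_true_eq]
  tauto

/-- Greedy retirement is optimal -/
theorem greedy_retiring_optimal {n : ℕ} (adj : Fin n → Fin n → Bool)
    (hT : IsTourn adj) (R : List (Fin n × Fin n)) (hR : R.Nodup)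
    (hRE : ∀ f ∈ R, adj f.1 f.2 = true)
    (e : Fin n × Fin n) (he : adj e.1 e.2 = true) (heR : e ∉ R)
    (hmin : ∀ f : Fin n × Fin n, adj f.1 f.2 = true → f ∉ R →
      retCost adj R e ≤ retCost adj R f) :
    pCost adj R = pCost adj (e :: R) := by
  classical
  set S : Set ℕ := {c : ℕ | ∃ M, IsRefinement adj R M ∧ listCost M = c} with hS
  set S' : Set ℕ := {c : ℕ | ∃ M, IsRefinement adj (e :: R) M ∧ listCost M = c} with hS'
  have hsub : S' ⊆ S := by
    rintro c ⟨M, ⟨h1, h2, P, hP⟩, hc⟩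
    exact ⟨M, ⟨h1, h2, P ++ [e], by simp [hP]⟩, hc⟩
  -- exchange lemma
  have hex : ∀ M, IsRefinement adj R M →
      ∃ M', IsRefinement adj (e :: R) M' ∧ listCost M' ≤ listCost M := by
    rintro M ⟨hnd, hmem, P, rfl⟩
    have heP : e ∈ P := by
      have : e ∈ P ++ R := (hmem e).2 he
      rcases List.mem_append.1 this with h | h
      · exact h
      · exact absurd h heR
    obtain ⟨A, B, rfl⟩ := List.append_of_mem heP
    -- basic structural facts
    have hPnd : (A ++ e :: B).Nodup := (List.nodup_append.1 hnd).1
    have hRnd : R.Nodup := (List.nodup_append.1 hnd).2.1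
    have hdisj : ∀ x ∈ A ++ e :: B, x ∉ R := fun x hx hxR =>
      (List.nodup_append.1 hnd).2.2 x hx x hxR rfl
    have hPm : ∀ f, f ∈ A ++ e :: B ↔ adj f.1 f.2 = true ∧ f ∉ R := by
      intro f
      constructor
      · intro hf
        exact ⟨(hmem f).1 (List.mem_append.2 (Or.inl hf)), hdisj f hf⟩
      · intro ⟨hf1, hf2⟩
        rcases List.mem_append.1 ((hmem f).2 hf1) with h | h
        · exact h
        · exact absurd h hf2
    have hABnd : (e :: (A ++ B)).Nodup := List.nodup_middle.1 hPnd
    have heAB : e ∉ A ++ B := (List.nodup_cons.1 hABnd).1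
    have hperm : ∀ L : List (Fin n × Fin n),
        List.Perm ((A ++ B) ++ e :: L) ((A ++ e :: B) ++ L) := by
      intro L
      refine List.perm_middle.trans ?_
      exact (List.Perm.append_right L (List.perm_middle (a := e) (l₁ := A) (l₂ := B))).symm
    refine ⟨(A ++ B) ++ e :: R, ⟨?_, ?_, A ++ B, rfl⟩, ?_⟩
    · exact ((hperm R).nodup_iff).2 hnd
    · intro f
      rw [(hperm R).mem_iff]
      exact hmem f
    · -- cost comparison
      refine aux_listCost_le ?_
      intro f hf
      have hfM' : f ∈ A ∨ f ∈ B ∨ f = e ∨ f ∈ R := by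
        rcases List.mem_append.1 hf with h | h
        · rcases List.mem_append.1 h with h | h
          · exact Or.inl h
          · exact Or.inr (Or.inl h)
        · rcases List.mem_cons.1 h with h | h
          · exact Or.inr (Or.inr (Or.inl h))
          · exact Or.inr (Or.inr (Or.inr h))
      rcases hfM' with hfA | hfB | rfl | hfR
      · -- f ∈ A
        obtain ⟨A1, A2, rfl⟩ := List.append_of_mem hfA
        have hfA1 : f ∉ A1 := by
          have := (List.nodup_append.1 hPnd).1
          exact (List.nodup_cons.1 (List.nodup_middle.1 this)).1 ∘ fun h =>
            List.mem_append.2 (Or.inl h)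
        have e1 : ((A1 ++ f :: A2) ++ B) ++ e :: R = A1 ++ f :: (A2 ++ (B ++ e :: R)) := by
          simp
        have e2 : ((A1 ++ f :: A2) ++ e :: B) ++ R = A1 ++ f :: (A2 ++ (e :: B ++ R)) := by
          simp
        rw [e1, aux_edgeCost_split hfA1]
        have hfM : f ∈ ((A1 ++ f :: A2) ++ e :: B) ++ R := by simp
        calc (A1.filter (fun g => g.1 = f.1 ∨ g.1 = f.2)).length + 1
            = listEdgeCost (((A1 ++ f :: A2) ++ e :: B) ++ R) f := by
              rw [e2, aux_edgeCost_split hfA1]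
          _ ≤ _ := aux_edgeCost_le_listCost hfM
      · -- f ∈ B
        obtain ⟨B1, B2, rfl⟩ := List.append_of_mem hfB
        have hfnA : f ∉ A ∧ f ≠ e ∧ f ∉ B1 := by
          have h1 := List.nodup_middle.1 hPnd  -- (e :: (A ++ (B1 ++ f :: B2))).Nodup
          have h2 : f ≠ e := by
            rintro rfl
            exact (List.nodup_cons.1 h1).1 (by simp)
          have h3 := (List.nodup_cons.1 h1).2  -- (A ++ (B1 ++ f :: B2)).Nodup
          have h4 : (A ++ B1 ++ f :: B2).Nodup := by simpa [List.append_assoc] using h3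
          have h5 := (List.nodup_cons.1 (List.nodup_middle.1 h4)).1
          constructor
          · exact fun h => h5 (by simp [h])
          refine ⟨h2, fun h => h5 (by simp [h])⟩
        have hnotM' : f ∉ A ++ B1 := by
          simp only [List.mem_append, not_or]
          exact ⟨hfnA.1, hfnA.2.2⟩
        have hnotM : f ∉ A ++ e :: B1 := by
          simp only [List.mem_append, List.mem_cons, not_or]
          exact ⟨hfnA.1, hfnA.2.1, hfnA.2.2⟩
        have e1 : (A ++ (B1 ++ f :: B2)) ++ e :: R = (A ++ B1) ++ f :: (B2 ++ e :: R) := by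
          simp
        have e2 : (A ++ e :: (B1 ++ f :: B2)) ++ R = (A ++ e :: B1) ++ f :: (B2 ++ R) := by
          simp
        rw [e1, aux_edgeCost_split hnotM']
        have hsub1 : List.Sublist (A ++ B1) (A ++ e :: B1) :=
          List.Sublist.append_left (List.sublist_cons_self e B1) A
        have hfilt := ((hsub1.filter (fun g => decide (g.1 = f.1 ∨ g.1 = f.2))).length_le)
        have hfM : f ∈ (A ++ e :: (B1 ++ f :: B2)) ++ R := by simp
        calc ((A ++ B1).filter (fun g => g.1 = f.1 ∨ g.1 = f.2)).length + 1
            ≤ ((A ++ e :: B1).filter (fun g => g.1 = f.1 ∨ g.1 = f.2)).length + 1 := by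
              omega
          _ = listEdgeCost ((A ++ e :: (B1 ++ f :: B2)) ++ R) f := by
              rw [e2, aux_edgeCost_split hnotM]
          _ ≤ _ := aux_edgeCost_le_listCost hfM
      · -- f = f
        rw [aux_edgeCost_split heAB]
        have hkey : ((A ++ B).filter (fun g => g.1 = f.1 ∨ g.1 = f.2)).length + 1
            = retCost adj R f := by
          rw [← aux_filter_retCost adj R (A ++ f :: B) hPnd hPm f]
          simp [List.filter_append, List.filter_cons]
          omega
        rw [hkey]
        -- bound retCost f by the cost of the last element of f :: B in M
        rcases List.eq_nil_or_concat (f :: B) with hC | ⟨C, g, hCg⟩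
        · exact absurd hC (by simp)
        rw [List.concat_eq_append] at hCg
        have hgP : g ∈ A ++ f :: B := by rw [hCg]; simp
        have hge : adj g.1 g.2 = true := ((hPm g).1 hgP).1
        have hgR : g ∉ R := ((hPm g).1 hgP).2
        have hgnotAC : g ∉ A ++ C := by
          have h1 : (A ++ (C ++ [g])).Nodup := by rw [← hCg]; exact hPnd
          have h2 : ((A ++ C) ++ g :: []).Nodup := by simpa [List.append_assoc] using h1
          have h3 := (List.nodup_cons.1 (List.nodup_middle.1 h2)).1
          simpa using h3
        have e2 : (A ++ f :: B) ++ R = (A ++ C) ++ g :: R := by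
          rw [hCg]; simp
        have hcostg : listEdgeCost ((A ++ f :: B) ++ R) g = retCost adj R g := by
          rw [e2, aux_edgeCost_split hgnotAC,
            ← aux_filter_retCost adj R (A ++ f :: B) hPnd hPm g]
          have e3 : A ++ f :: B = (A ++ C) ++ [g] := by rw [hCg]; simp
          rw [e3]
          simp [List.filter_append, List.filter_cons]
          omega
        have hgM : g ∈ (A ++ f :: B) ++ R := List.mem_append.2 (Or.inl hgP)
        calc retCost adj R f ≤ retCost adj R g := hmin g hge hgR
          _ = listEdgeCost ((A ++ f :: B) ++ R) g := hcostg.symm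
          _ ≤ _ := aux_edgeCost_le_listCost hgM
      · -- f ∈ R
        obtain ⟨R1, R2, rfl⟩ := List.append_of_mem hfR
        have hfR1 : f ∉ R1 := by
          have := List.nodup_middle.1 hRnd
          exact fun h => (List.nodup_cons.1 this).1 (List.mem_append.2 (Or.inl h))
        have hfP : f ∉ A ++ e :: B := fun h => hdisj f h hfR
        have hne : f ≠ e := by
          rintro rfl
          exact heR hfR
        have hnotM' : f ∉ (A ++ B) ++ e :: R1 := by
          simp only [List.mem_append, List.mem_cons, not_or]
          refine ⟨⟨fun h => hfP (by simp [h]), fun h => hfP (by simp [h])⟩, hne, hfR1⟩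
        have hnotM : f ∉ (A ++ e :: B) ++ R1 := by
          intro h
          rcases List.mem_append.1 h with h | h
          · exact hfP h
          · exact hfR1 h
        have e1 : (A ++ B) ++ e :: (R1 ++ f :: R2) = ((A ++ B) ++ e :: R1) ++ f :: R2 := by
          simp
        have e2 : (A ++ e :: B) ++ (R1 ++ f :: R2) = ((A ++ e :: B) ++ R1) ++ f :: R2 := by
          simp
        rw [e1, aux_edgeCost_split hnotM']
        have hflen : (((A ++ B) ++ e :: R1).filter (fun g => decide (g.1 = f.1 ∨ g.1 = f.2))).length
            = (((A ++ e :: B) ++ R1).filter (fun g => decide (g.1 = f.1 ∨ g.1 = f.2))).length :=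
          ((hperm R1).filter _).length_eq
        have hfM : f ∈ (A ++ e :: B) ++ (R1 ++ f :: R2) := by simp
        calc (((A ++ B) ++ e :: R1).filter (fun g => g.1 = f.1 ∨ g.1 = f.2)).length + 1
            = (((A ++ e :: B) ++ R1).filter (fun g => g.1 = f.1 ∨ g.1 = f.2)).length + 1 := by
              omega
          _ = listEdgeCost ((A ++ e :: B) ++ (R1 ++ f :: R2)) f := by
              rw [e2, aux_edgeCost_split hnotM]
          _ ≤ _ := aux_edgeCost_le_listCost hfM
  have hpc : pCost adj R = sInf S := rfl
  have hpc' : pCost adj (e :: R) = sInf S' := rfl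
  rcases Set.eq_empty_or_nonempty S with hSe | hSne
  · have hS'e : S' = ∅ := Set.eq_empty_of_subset_empty (hSe ▸ hsub)
    rw [hpc, hpc', hSe, hS'e]
  · obtain ⟨M, hM, hMc⟩ := Nat.sInf_mem hSne
    obtain ⟨M', hM', hle⟩ := hex M hM
    have h1 : sInf S' ≤ sInf S := le_trans (Nat.sInf_le ⟨M', hM', rfl⟩) (by omega)
    have h2 : sInf S ≤ sInf S' := by
      have hS'ne : S'.Nonempty := ⟨listCost M', M', hM', rfl⟩
      exact Nat.sInf_le (hsub (Nat.sInf_mem hS'ne))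
    rw [hpc, hpc']
    exact le_antisymm h2 h1
end

section
/- Every mutual search algorithm for two agents on n ≥ 2 sites has cost at least ceil(n/2). -/
namespace OrdTournament

variable {n : ℕ}

lemma ne_of_adj (T : OrdTournament n) {a b : Fin n} (h : T.adj a b = true) : a ≠ b := by
  intro e; subst e; rw [T.irrefl a] at h; exact Bool.false_ne_true h

lemma edgeCost_le_cost (T : OrdTournament n) {a b : Fin n} (h : T.adj a b = true) :
    T.edgeCost a b ≤ T.cost := by
  apply Finset.le_sup (f := fun p : Fin n × Fin n => T.edgeCost p.1 p.2) (b := (a, b))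
  simp [h]

lemma rowLen_le_cost (T : OrdTournament n) (i : Fin n) (h : 1 ≤ T.rowLen i) :
    T.rowLen i ≤ T.cost := by
  have hne : (T.row i).Nonempty := Finset.card_pos.mp h
  obtain ⟨b, hb, hmax⟩ := Finset.exists_max_image (T.row i) (fun j => T.time i j) hne
  have hadj : T.adj i b = true := (Finset.mem_filter.mp hb).2
  have hsub : (T.row i).erase b ⊆ (T.row i).filter (fun j => T.time i j < T.time i b) := by
    intro j hj
    have hjb := Finset.ne_of_mem_erase hj
    have hjr := Finset.mem_of_mem_erase hj
    refine Finset.mem_filter.mpr ⟨hjr, ?_⟩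
    rcases lt_or_eq_of_le (hmax j hjr) with h' | h'
    · exact h'
    · exfalso
      have := T.time_inj i j i b (Finset.mem_filter.mp hjr).2 hadj h'
      simp only [Prod.mk.injEq] at this
      exact hjb this.2
  have h1 : T.rowLen i - 1 ≤ T.nBefore i i b := by
    calc T.rowLen i - 1 = ((T.row i).erase b).card := (Finset.card_erase_of_mem hb).symm
    _ ≤ _ := Finset.card_le_card hsub
  have h2 : T.rowLen i ≤ T.edgeCost i b := by
    unfold edgeCost; omega
  exact h2.trans (T.edgeCost_le_cost hadj)

lemma rowLen_add_indeg (T : OrdTournament n) (i : Fin n) :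
    T.rowLen i + (Finset.univ.filter (fun j => T.adj j i = true)).card = n - 1 := by
  have hdisj : Disjoint (T.row i) (Finset.univ.filter (fun j => T.adj j i = true)) := by
    rw [Finset.disjoint_left]
    intro j hj1 hj2
    have h1 : T.adj i j = true := (Finset.mem_filter.mp hj1).2
    have h2 : T.adj j i = true := (Finset.mem_filter.mp hj2).2
    have hne := T.ne_of_adj h1
    have := (T.oneway i j hne).mp h1
    rw [this] at h2; exact Bool.false_ne_true h2
  have hunion : T.row i ∪ Finset.univ.filter (fun j => T.adj j i = true) =
      Finset.univ.erase i := by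
    ext j
    simp only [row, Finset.mem_union, Finset.mem_filter, Finset.mem_univ, true_and,
      Finset.mem_erase, and_true]
    constructor
    · rintro (h | h) e
      · subst e; rw [T.irrefl] at h; exact Bool.false_ne_true h
      · subst e; rw [T.irrefl] at h; exact Bool.false_ne_true h
    · intro hji
      rcases Bool.eq_false_or_eq_true (T.adj i j) with h | h
      · left; exact h
      · right
        exact (T.oneway j i hji).mpr h
  have := Finset.card_union_of_disjoint hdisj
  rw [hunion, Finset.card_erase_of_mem (Finset.mem_univ i), Finset.card_univ,
    Fintype.card_fin] at this
  unfold rowLen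
  omega

lemma sum_two_rowLen (T : OrdTournament n) :
    ∑ i, 2 * T.rowLen i = n * (n - 1) := by
  have hswap : ∑ i, T.rowLen i =
      ∑ i, (Finset.univ.filter (fun j => T.adj j i = true)).card := by
    simp only [rowLen, row, Finset.card_filter]
    exact Finset.sum_comm
  have hsum : ∑ i, (T.rowLen i +
      (Finset.univ.filter (fun j => T.adj j i = true)).card) = n * (n - 1) := by
    rw [Finset.sum_congr rfl (fun i _ => T.rowLen_add_indeg i)]
    simp [Finset.sum_const, Finset.card_univ, mul_comm]
  rw [Finset.sum_add_distrib, ← hswap] at hsum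
  have : ∑ i, 2 * T.rowLen i = 2 * ∑ i, T.rowLen i := by
    rw [Finset.mul_sum]
  omega

lemma exists_last_edge (T : OrdTournament n) (hn : 2 ≤ n) :
    ∃ a b, T.adj a b = true ∧ ∀ c d, T.adj c d = true → T.time c d ≤ T.time a b := by
  have h0 : (0 : ℕ) < n := by omega
  have h1 : (1 : ℕ) < n := by omega
  have hne : (⟨0, h0⟩ : Fin n) ≠ ⟨1, h1⟩ := by simp [Fin.ext_iff]
  set s := Finset.univ.filter (fun p : Fin n × Fin n => T.adj p.1 p.2 = true) with hs
  have hsne : s.Nonempty := by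
    rcases Bool.eq_false_or_eq_true (T.adj ⟨0, h0⟩ ⟨1, h1⟩) with h | h
    · refine ⟨(⟨0, h0⟩, ⟨1, h1⟩), ?_⟩
      simp only [hs, Finset.mem_filter, Finset.mem_univ, true_and]
      exact h
    · refine ⟨(⟨1, h1⟩, ⟨0, h0⟩), ?_⟩
      simp only [hs, Finset.mem_filter, Finset.mem_univ, true_and]
      exact (T.oneway _ _ (Ne.symm hne)).mpr h
  obtain ⟨p, hp, hpmax⟩ := Finset.exists_max_image s (fun p => T.time p.1 p.2) hsne
  refine ⟨p.1, p.2, (Finset.mem_filter.mp hp).2, fun c d hcd => ?_⟩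
  exact hpmax (c, d) (Finset.mem_filter.mpr ⟨Finset.mem_univ _, hcd⟩)

end OrdTournament

/-- Every mutual search algorithm for two agents on `n ≥ 2` sites has cost
at least `⌈n/2⌉` (written `(n+1)/2` with natural division). -/
theorem ms_lower_bound_half {n : ℕ} (hn : 2 ≤ n) (T : OrdTournament n) :
    (n + 1) / 2 ≤ T.cost := by
  by_cases hbig : ∃ i, n ≤ 2 * T.rowLen i
  · obtain ⟨i, hi⟩ := hbig
    have h1 : 1 ≤ T.rowLen i := by omega
    have := T.rowLen_le_cost i h1
    omega
  · push_neg at hbig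
    have hsum := T.sum_two_rowLen
    have hall : ∀ i, 2 * T.rowLen i = n - 1 := by
      by_contra hc
      push_neg at hc
      obtain ⟨a, ha⟩ := hc
      have hlt : ∑ i, 2 * T.rowLen i < ∑ _i : Fin n, (n - 1) := by
        apply Finset.sum_lt_sum
        · intro i _
          have := hbig i; omega
        · exact ⟨a, Finset.mem_univ a, by have := hbig a; omega⟩
      rw [Finset.sum_const, Finset.card_univ, Fintype.card_fin, smul_eq_mul] at hlt
      omega
    obtain ⟨a, b, hab, hmax⟩ := T.exists_last_edge hn
    have hanb : a ≠ b := T.ne_of_adj hab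
    have hbrow : b ∈ T.row a := by
      simp only [OrdTournament.row, Finset.mem_filter, Finset.mem_univ, true_and]
      exact hab
    -- nBefore a a b ≥ rowLen a - 1
    have hsub1 : (T.row a).erase b ⊆
        (T.row a).filter (fun j => T.time a j < T.time a b) := by
      intro j hj
      have hjb := Finset.ne_of_mem_erase hj
      have hjr := Finset.mem_of_mem_erase hj
      have hadjj : T.adj a j = true := (Finset.mem_filter.mp hjr).2
      refine Finset.mem_filter.mpr ⟨hjr, ?_⟩
      rcases lt_or_eq_of_le (hmax a j hadjj) with h' | h'
      · exact h'
      · exfalso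
        have := T.time_inj a j a b hadjj hab h'
        simp only [Prod.mk.injEq] at this
        exact hjb this.2
    have h1 : T.rowLen a - 1 ≤ T.nBefore a a b := by
      calc T.rowLen a - 1 = ((T.row a).erase b).card :=
            (Finset.card_erase_of_mem hbrow).symm
      _ ≤ _ := Finset.card_le_card hsub1
    -- nBefore b a b ≥ rowLen b
    have hsub2 : T.row b ⊆ (T.row b).filter (fun j => T.time b j < T.time a b) := by
      intro j hj
      have hadjj : T.adj b j = true := (Finset.mem_filter.mp hj).2
      refine Finset.mem_filter.mpr ⟨hj, ?_⟩
      rcases lt_or_eq_of_le (hmax b j hadjj) with h' | h'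
      · exact h'
      · exfalso
        have := T.time_inj b j a b hadjj hab h'
        simp only [Prod.mk.injEq] at this
        exact hanb this.1.symm
    have h2 : T.rowLen b ≤ T.nBefore b a b := Finset.card_le_card hsub2
    have h3 : 1 ≤ T.rowLen a := Finset.card_pos.mpr ⟨b, hbrow⟩
    have h4 : T.edgeCost a b ≤ T.cost := T.edgeCost_le_cost hab
    have ha' := hall a
    have hb' := hall b
    unfold OrdTournament.edgeCost at h4
    omega
end

section
/- In any mutual search algorithm on n sites, the sum of the lengths of the two shortest rows is a lower bound on the cost of the algorithm. -/
/-- In any mutual search algorithm on `n ≥ 2` sites, the sum of the lengths of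
the two shortest rows is a lower bound on the cost of the algorithm: there are
two distinct vertices whose row-length sum is minimal among all pairs of
distinct vertices, and this sum is at most the cost. -/
theorem two_shortest_rows_lower_bound {n : ℕ} (hn : 2 ≤ n)
    (T : OrdTournament n) :
    ∃ i j : Fin n, i ≠ j ∧
      (∀ k l : Fin n, k ≠ l → T.rowLen i + T.rowLen j ≤ T.rowLen k + T.rowLen l) ∧
      T.rowLen i + T.rowLen j ≤ T.cost := by
  -- two distinct vertices exist
  have h0 : (0 : ℕ) < n := by omega
  have h1 : (1 : ℕ) < n := by omega
  set v0 : Fin n := ⟨0, h0⟩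
  set v1 : Fin n := ⟨1, h1⟩
  have hv : v0 ≠ v1 := by simp [v0, v1, Fin.ext_iff]
  -- edge set is nonempty
  set E : Finset (Fin n × Fin n) :=
    Finset.univ.filter (fun p : Fin n × Fin n => T.adj p.1 p.2 = true) with hE
  have hEne : E.Nonempty := by
    rcases Bool.eq_false_or_eq_true (T.adj v0 v1) with h | h
    · exact ⟨(v0, v1), by simp [hE, h]⟩
    · exact ⟨(v1, v0), by
        have := (T.oneway v1 v0 hv.symm).mpr h
        simp [hE, this]⟩

  -- maximal-time edge
  obtain ⟨p, hpE, hpmax⟩ := Finset.exists_max_image E (fun p => T.time p.1 p.2) hEne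
  obtain ⟨a, b⟩ := p
  have hab : T.adj a b = true := by simpa [hE] using hpE
  have haneb : a ≠ b := by
    intro h; rw [h, T.irrefl] at hab; exact Bool.false_ne_true hab
  -- nBefore a a b = rowLen a - 1
  have hbrow : b ∈ T.row a := by simp [OrdTournament.row, hab]
  have hA : T.nBefore a a b = T.rowLen a - 1 := by
    have : (T.row a).filter (fun j => T.time a j < T.time a b) = (T.row a).erase b := by
      ext j
      simp only [Finset.mem_filter, Finset.mem_erase]
      constructor
      · rintro ⟨hj, hlt⟩
        refine ⟨fun hjb => by simp [hjb] at hlt, hj⟩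
      · rintro ⟨hjb, hj⟩
        have hadj : T.adj a j = true := by
          simpa [OrdTournament.row] using hj
        have hle : T.time a j ≤ T.time a b := hpmax (a, j) (by simp [hE, hadj])
        refine ⟨hj, lt_of_le_of_ne hle fun heq => ?_⟩
        have := T.time_inj a j a b hadj hab heq
        exact hjb (by simpa using this)
    rw [OrdTournament.nBefore, this, Finset.card_erase_of_mem hbrow, OrdTournament.rowLen]
  -- nBefore b a b = rowLen b
  have hB : T.nBefore b a b = T.rowLen b := by
    have : (T.row b).filter (fun j => T.time b j < T.time a b) = T.row b := by
      apply Finset.filter_true_of_mem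
      intro j hj
      have hadj : T.adj b j = true := by simpa [OrdTournament.row] using hj
      have hle : T.time b j ≤ T.time a b := hpmax (b, j) (by simp [hE, hadj])
      refine lt_of_le_of_ne hle fun heq => ?_
      have := T.time_inj b j a b hadj hab heq
      exact haneb ((congrArg Prod.fst this).symm)
    rw [OrdTournament.nBefore, this, OrdTournament.rowLen]
  have hcard : 1 ≤ T.rowLen a := Finset.card_pos.mpr ⟨b, hbrow⟩
  have hcost : T.rowLen a + T.rowLen b ≤ T.cost := by
    have hle : T.edgeCost a b ≤ T.cost :=
      Finset.le_sup (f := fun p : Fin n × Fin n => T.edgeCost p.1 p.2) hpE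
    have : T.edgeCost a b = T.rowLen a + T.rowLen b := by
      rw [OrdTournament.edgeCost, hA, hB]; omega
    omega
  -- minimizing pair
  set P : Finset (Fin n × Fin n) := Finset.univ.filter (fun p : Fin n × Fin n => p.1 ≠ p.2)
    with hP
  have hPne : P.Nonempty := ⟨(v0, v1), by simp [hP, hv]⟩
  obtain ⟨q, hqP, hqmin⟩ :=
    Finset.exists_min_image P (fun p => T.rowLen p.1 + T.rowLen p.2) hPne
  have hq : q.1 ≠ q.2 := by simpa [hP] using hqP
  refine ⟨q.1, q.2, hq, fun k l hkl => hqmin (k, l) (by simp [hP, hkl]), ?_⟩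
  exact le_trans (hqmin (a, b) (by simp [hP, haneb])) hcost
end

section
/- Let T be a mutual search algorithm on n sites with cost c, and let k ≥ 0. Then the (k+1)st shortest row of T has length at most c/2 + k. Equivalently, there exist at least k+1 vertices whose row lengths are at most c/2 + k. -/
lemma row_split {n : ℕ} (T : OrdTournament n) (a b v : Fin n) (E : Finset (Fin n))
    (H : ∀ x ∈ T.row v, ¬ T.time v x < T.time a b → x ∈ E) :
    T.rowLen v ≤ T.nBefore v a b + E.card := by
  have h1 : T.nBefore v a b +
      ((T.row v).filter (fun x => ¬ T.time v x < T.time a b)).card = T.rowLen v :=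
    Finset.card_filter_add_card_filter_not _
  have h2 : ((T.row v).filter (fun x => ¬ T.time v x < T.time a b)).card ≤ E.card := by
    refine Finset.card_le_card (fun x hx => ?_)
    rcases Finset.mem_filter.mp hx with ⟨hx1, hx2⟩
    exact H x hx1 hx2
  omega

/-- Let `T` be a mutual search algorithm on `n` sites with cost `c`, and let
`k ≥ 0` with `k + 1 ≤ n`. Then the `(k+1)`st shortest row has length at most
`c/2 + k`: there exist at least `k+1` vertices whose row lengths `ℓ` satisfy
`ℓ ≤ c/2 + k` (stated as `2ℓ ≤ c + 2k` to avoid division). -/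
theorem kth_shortest_row_bound {n : ℕ} (T : OrdTournament n) (k : ℕ)
    (hk : k + 1 ≤ n) :
    ∃ S : Finset (Fin n), S.card = k + 1 ∧
      ∀ i ∈ S, 2 * T.rowLen i ≤ T.cost + 2 * k := by
  set c := T.cost with hc
  set G := Finset.univ.filter (fun i : Fin n => 2 * T.rowLen i ≤ c + 2 * k) with hG
  suffices h : k + 1 ≤ G.card by
    obtain ⟨S, hSsub, hScard⟩ := Finset.exists_subset_card_eq (s := G) (n := k + 1) h
    exact ⟨S, hScard, fun i hi => (Finset.mem_filter.mp (hSsub hi)).2⟩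
  by_contra hlt
  push_neg at hlt
  have hGk : G.card ≤ k := Nat.lt_succ_iff.mp hlt
  have hcards : G.card + Gᶜ.card = n := by
    simpa using Finset.card_add_card_compl G
  -- every row has length at most n - 1
  have hrow : ∀ i : Fin n, T.rowLen i + 1 ≤ n := by
    intro i
    have : T.row i ⊆ Finset.univ.erase i := by
      intro x hx
      rcases Finset.mem_filter.mp hx with ⟨-, hadj⟩
      refine Finset.mem_erase.mpr ⟨?_, Finset.mem_univ x⟩
      intro h; rw [h] at hadj; rw [T.irrefl i] at hadj; exact Bool.noConfusion hadj
    have := Finset.card_le_card this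
    rw [Finset.card_erase_of_mem (Finset.mem_univ i), Finset.card_univ, Fintype.card_fin] at this
    have hn : 1 ≤ n := le_trans (Nat.le_add_left 1 k) hk
    have hrl : T.rowLen i = (T.row i).card := rfl
    omega
  rcases Nat.lt_or_ge Gᶜ.card 2 with hB | hB
  · -- at most one bad vertex: then n = k+1 and every row has length ≤ k
    have hn : n = k + 1 := by omega
    have hne : Gᶜ.Nonempty := Finset.card_pos.mp (by omega)
    obtain ⟨b, hb⟩ := hne
    have hbG : b ∉ G := Finset.mem_compl.mp hb
    refine hbG (Finset.mem_filter.mpr ⟨Finset.mem_univ b, ?_⟩)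
    have := hrow b
    omega
  · -- two bad vertices: take the last edge between bad vertices
    obtain ⟨i, hi, j, hj, hij⟩ := Finset.one_lt_card.mp hB
    have hP : ∃ p : Fin n × Fin n,
        p ∈ Finset.univ.filter
          (fun p : Fin n × Fin n => T.adj p.1 p.2 = true ∧ p.1 ∈ Gᶜ ∧ p.2 ∈ Gᶜ) := by
      rcases Bool.eq_false_or_eq_true (T.adj i j) with h | h
      · exact ⟨(i, j), Finset.mem_filter.mpr ⟨Finset.mem_univ _, h, hi, hj⟩⟩
      · exact ⟨(j, i), Finset.mem_filter.mpr ⟨Finset.mem_univ _,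
          (T.oneway j i (Ne.symm hij)).mpr h, hj, hi⟩⟩
    obtain ⟨p, hp⟩ := hP
    obtain ⟨q, hq, hqmax⟩ := Finset.exists_max_image _
      (fun p : Fin n × Fin n => T.time p.1 p.2) ⟨p, hp⟩
    obtain ⟨-, hadj, haB, hbB⟩ := Finset.mem_filter.mp hq
    set a := q.1 with ha'
    set b := q.2 with hb'
    have hab : a ≠ b := by
      intro h
      rw [h, T.irrefl b] at hadj
      exact Bool.noConfusion hadj
    -- row a: late queries go to b or to G
    have hA : T.rowLen a ≤ T.nBefore a a b + (insert b G).card := by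
      refine row_split T a b a (insert b G) (fun x hx hlate => ?_)
      rcases Finset.mem_filter.mp hx with ⟨-, hax⟩
      by_contra hxmem
      rw [Finset.mem_insert] at hxmem
      push_neg at hxmem
      obtain ⟨hxb, hxG⟩ := hxmem
      have hxB : x ∈ Gᶜ := Finset.mem_compl.mpr hxG
      have hle := hqmax (a, x) (Finset.mem_filter.mpr ⟨Finset.mem_univ _, hax, haB, hxB⟩)
      simp only at hle
      have heq : T.time a x = T.time a b := le_antisymm hle (not_lt.mp hlate)
      have := T.time_inj a x a b hax hadj heq
      exact hxb (congrArg Prod.snd this)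
    -- row b: late queries go to G
    have hBr : T.rowLen b ≤ T.nBefore b a b + G.card := by
      refine row_split T a b b G (fun x hx hlate => ?_)
      rcases Finset.mem_filter.mp hx with ⟨-, hbx⟩
      by_contra hxG
      have hxB : x ∈ Gᶜ := Finset.mem_compl.mpr hxG
      have hle := hqmax (b, x) (Finset.mem_filter.mpr ⟨Finset.mem_univ _, hbx, hbB, hxB⟩)
      simp only at hle
      have heq : T.time b x = T.time a b := le_antisymm hle (not_lt.mp hlate)
      have := T.time_inj b x a b hbx hadj heq
      exact hab (congrArg Prod.fst this).symm
    have hins : (insert b G).card ≤ G.card + 1 := Finset.card_insert_le b G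
    -- the edge cost is at most the total cost
    have hce : T.edgeCost a b ≤ c := by
      rw [hc]
      exact Finset.le_sup (f := fun p : Fin n × Fin n => T.edgeCost p.1 p.2)
        (Finset.mem_filter.mpr ⟨Finset.mem_univ (a, b), hadj⟩)
    have haG : ¬ 2 * T.rowLen a ≤ c + 2 * k := by
      intro h
      exact (Finset.mem_compl.mp haB) (Finset.mem_filter.mpr ⟨Finset.mem_univ a, h⟩)
    have hbG : ¬ 2 * T.rowLen b ≤ c + 2 * k := by
      intro h
      exact (Finset.mem_compl.mp hbB) (Finset.mem_filter.mpr ⟨Finset.mem_univ b, h⟩)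
    have hEC : T.edgeCost a b = T.nBefore a a b + 1 + T.nBefore b a b := rfl
    omega
end
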